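/- Let Ω be a proper open convex subset of a real normed vector space V and let λ > 0. Then the function x ↦ (dist(x, V \ Ω))^{−λ} is convex on Ω. -/

import Mathlib

open Metric Real Set

private lemma aux_rpow_neg_convex (lam : ℝ) (hlam : 0 < lam) {a b dx dy : ℝ}
    (hdx : 0 < dx) (hdy : 0 < dy) (ha : 0 ≤ a) (hb : 0 ≤ b) (hab : a + b = 1) :
    (a * dx + b * dy) ^ (-lam) ≤ a * dx ^ (-lam) + b * dy ^ (-lam) := by
  have hs : 0 < a * dx + b * dy := by
    have h1 : 0 ≤ a * (dx - min dx dy) := mul_nonneg ha (sub_nonneg.2 (min_le_left _ _))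
    have h2 : 0 ≤ b * (dy - min dx dy) := mul_nonneg hb (sub_nonneg.2 (min_le_right _ _))
    have h3 : 0 < min dx dy := lt_min hdx hdy
    nlinarith
  have hlog : a * Real.log dx + b * Real.log dy ≤ Real.log (a * dx + b * dy) := by
    have := strictConcaveOn_log_Ioi.concaveOn.2 (mem_Ioi.2 hdx) (mem_Ioi.2 hdy) ha hb hab
    simpa using this
  rw [Real.rpow_def_of_pos hs, Real.rpow_def_of_pos hdx, Real.rpow_def_of_pos hdy]
  calc Real.exp (Real.log (a * dx + b * dy) * (-lam))
      ≤ Real.exp ((a * Real.log dx + b * Real.log dy) * (-lam)) := by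
        apply Real.exp_le_exp.2; nlinarith
    _ = Real.exp (a * (Real.log dx * (-lam)) + b * (Real.log dy * (-lam))) := by ring_nf
    _ ≤ a * Real.exp (Real.log dx * (-lam)) + b * Real.exp (Real.log dy * (-lam)) := by
        have := convexOn_exp.2 (mem_univ (Real.log dx * (-lam)))
          (mem_univ (Real.log dy * (-lam))) ha hb hab
        simpa using this

/-- `x ↦ dist(x, V \ Ω)^{-λ}` is convex on a proper open convex
subset `Ω`, for `λ > 0`. -/
theorem convexOn_rpow_neg_dist_to_compl
    {V : Type*} [NormedAddCommGroup V] [NormedSpace ℝ V]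
    (Ω : Set V) (hopen : IsOpen Ω) (hconv : Convex ℝ Ω) (hproper : Ω ≠ Set.univ)
    (lam : ℝ) (hlam : 0 < lam) :
    ConvexOn ℝ Ω (fun x => Metric.infDist x Ωᶜ ^ (-lam)) := by
  have hne : Ωᶜ.Nonempty := Set.nonempty_compl.2 hproper
  have hpos : ∀ x ∈ Ω, 0 < infDist x Ωᶜ := fun x hx =>
    (hopen.isClosed_compl.notMem_iff_infDist_pos hne).1 (fun h => h hx)
  refine ⟨hconv, fun x hx y hy a b ha hb hab => ?_⟩
  set dx := infDist x Ωᶜ with hdx'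
  set dy := infDist y Ωᶜ with hdy'
  have hdx : 0 < dx := hpos x hx
  have hdy : 0 < dy := hpos y hy
  set z := a • x + b • y with hz
  have hr : 0 < a * dx + b * dy := by
    have h1 : 0 ≤ a * (dx - min dx dy) := mul_nonneg ha (sub_nonneg.2 (min_le_left _ _))
    have h2 : 0 ≤ b * (dy - min dx dy) := mul_nonneg hb (sub_nonneg.2 (min_le_right _ _))
    have h3 : 0 < min dx dy := lt_min hdx hdy
    nlinarith
  -- the ball of radius `a*dx + b*dy` around `z` is contained in `Ω`
  have hball : ball z (a * dx + b * dy) ⊆ Ω := by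
    intro w hw
    rw [mem_ball, dist_eq_norm] at hw
    set δ := w - z with hδ
    have hu : x + (dx / (a * dx + b * dy)) • δ ∈ Ω := by
      apply ball_infDist_compl_subset
      rw [mem_ball, dist_eq_norm]
      have : ‖x + (dx / (a * dx + b * dy)) • δ - x‖ = (dx / (a * dx + b * dy)) * ‖δ‖ := by
        rw [add_sub_cancel_left, norm_smul, Real.norm_eq_abs,
          abs_of_nonneg (by positivity)]
      rw [this]
      calc dx / (a * dx + b * dy) * ‖δ‖ < dx / (a * dx + b * dy) * (a * dx + b * dy) := by
            apply mul_lt_mul_of_pos_left hw (by positivity)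
        _ = dx := div_mul_cancel₀ _ hr.ne'
    have hv : y + (dy / (a * dx + b * dy)) • δ ∈ Ω := by
      apply ball_infDist_compl_subset
      rw [mem_ball, dist_eq_norm]
      have : ‖y + (dy / (a * dx + b * dy)) • δ - y‖ = (dy / (a * dx + b * dy)) * ‖δ‖ := by
        rw [add_sub_cancel_left, norm_smul, Real.norm_eq_abs,
          abs_of_nonneg (by positivity)]
      rw [this]
      calc dy / (a * dx + b * dy) * ‖δ‖ < dy / (a * dx + b * dy) * (a * dx + b * dy) := by
            apply mul_lt_mul_of_pos_left hw (by positivity)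
        _ = dy := div_mul_cancel₀ _ hr.ne'
    have hcomb := hconv hu hv ha hb hab
    have hcoef : a * (dx / (a * dx + b * dy)) + b * (dy / (a * dx + b * dy)) = 1 := by
      field_simp
    have heq : a • (x + (dx / (a * dx + b * dy)) • δ) + b • (y + (dy / (a * dx + b * dy)) • δ)
        = w := by
      rw [smul_add, smul_add, smul_smul, smul_smul]
      have h4 : a • x + (a * (dx / (a * dx + b * dy))) • δ
            + (b • y + (b * (dy / (a * dx + b * dy))) • δ)
          = (a • x + b • y) + (a * (dx / (a * dx + b * dy)) + b * (dy / (a * dx + b * dy))) • δ := by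
        rw [add_smul]; abel
      rw [h4, hcoef, one_smul, hδ, ← hz]
      abel
    rwa [heq] at hcomb
  -- concavity of the distance
  have hd : a * dx + b * dy ≤ infDist z Ωᶜ := by
    by_contra hlt
    push_neg at hlt
    obtain ⟨w, hwc, hw⟩ := (infDist_lt_iff hne).1 hlt
    exact hwc (hball (by rwa [mem_ball, dist_comm]))
  simp only [smul_eq_mul]
  calc infDist z Ωᶜ ^ (-lam) ≤ (a * dx + b * dy) ^ (-lam) :=
        Real.rpow_le_rpow_of_nonpos hr hd (neg_nonpos.2 hlam.le)
    _ ≤ a * dx ^ (-lam) + b * dy ^ (-lam) :=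
        aux_rpow_neg_convex lam hlam hdx hdy ha hb hab
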